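/- Let N ≥ 1 and 1 ≤ k ≤ N−1. Then Γ_{k+1}^+ ⊆ Γ_k^+. In particular there is a chain of inclusions {λ ∈ ℝ^N : λ_j > 0 for all j} = Γ_N^+ ⊆ Γ_{N−1}^+ ⊆ ⋯ ⊆ Γ_1^+. -/
import Mathlib

/-- The k-th elementary symmetric function of a vector `lam ∈ ℝ^N`. -/
def vsigma (N k : ℕ) (lam : Fin N → ℝ) : ℝ :=
  ∑ s ∈ Finset.powersetCard k Finset.univ, ∏ i ∈ s, lam i

/-- `Γ_k^+` is the connected component of `{λ : σ_k(λ) > 0}` containing `(1,…,1)`. -/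
def GammaPlus (N k : ℕ) : Set (Fin N → ℝ) :=
  connectedComponentIn {lam | 0 < vsigma N k lam} (fun _ => 1)

open Multiset Polynomial

lemma my_esymm_zero (s : Multiset ℝ) : s.esymm 0 = 1 := by
  simp [Multiset.esymm, Multiset.powersetCard_zero_left]

lemma my_esymm_cons (a : ℝ) (s : Multiset ℝ) (k : ℕ) :
    (a ::ₘ s).esymm (k + 1) = a * s.esymm k + s.esymm (k + 1) := by
  rw [Multiset.esymm, Multiset.powersetCard_cons, Multiset.map_add, Multiset.sum_add, add_comm,
    Multiset.map_map]
  rw [Multiset.esymm, Multiset.esymm, ← Multiset.sum_map_mul_left]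
  congr 2
  apply Multiset.map_congr rfl
  intro t _
  simp [Multiset.prod_cons]

lemma my_esymm_card (s : Multiset ℝ) : s.esymm (Multiset.card s) = s.prod := by
  have h1 : Multiset.card (s.powersetCard (Multiset.card s)) = 1 := by
    rw [Multiset.card_powersetCard, Nat.choose_self]
  obtain ⟨t, ht⟩ := Multiset.card_eq_one.mp h1
  have htm : t ∈ s.powersetCard (Multiset.card s) := by rw [ht]; simp
  obtain ⟨hle, hc⟩ := Multiset.mem_powersetCard.mp htm
  have : t = s := Multiset.eq_of_le_of_card_le hle (le_of_eq hc.symm)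
  rw [Multiset.esymm, ht, this]
  simp

lemma my_esymm_above (s : Multiset ℝ) (k : ℕ) (h : Multiset.card s < k) : s.esymm k = 0 := by
  rw [Multiset.esymm, Multiset.powersetCard_eq_empty _ h]
  simp

lemma sq_map_prod (s : Multiset ℝ) : (s.map (fun x => x ^ 2)).prod = s.prod ^ 2 := by
  induction s using Multiset.induction with
  | empty => simp
  | cons a s ih => simp [ih]; ring

lemma my_esymm_identity (s : Multiset ℝ) : ∀ (n : ℕ), Multiset.card s = n + 2 →
    (s.esymm (n + 1)) ^ 2 =
      2 * s.esymm n * s.esymm (n + 2) + (s.map (fun x => x ^ 2)).esymm (n + 1) := by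
  induction s using Multiset.induction with
  | empty => intro n h; simp at h
  | cons a s ih =>
    intro n h
    rw [Multiset.card_cons] at h
    have hcs : Multiset.card s = n + 1 := by omega
    rw [Multiset.map_cons]
    match n with
    | 0 =>
      obtain ⟨b, hb⟩ := Multiset.card_eq_one.mp hcs
      subst hb
      have h1 : ({b} : Multiset ℝ).esymm 1 = b := by
        rw [show (1:ℕ) = Multiset.card ({b} : Multiset ℝ) by simp, my_esymm_card]; simp
      have h2 : (({b} : Multiset ℝ).map (fun x => x ^ 2)).esymm 1 = b ^ 2 := by
        rw [show (1:ℕ) = Multiset.card (({b} : Multiset ℝ).map (fun x => x ^ 2)) by simp,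
          my_esymm_card]; simp
      have h3 : ({b} : Multiset ℝ).esymm 2 = 0 := my_esymm_above _ _ (by simp)
      have h4 : (a ::ₘ ({b} : Multiset ℝ)).esymm 2 = a * b := by
        rw [show (2:ℕ) = Multiset.card (a ::ₘ ({b} : Multiset ℝ)) by simp, my_esymm_card]; simp
      have h5 := my_esymm_cons (a ^ 2) (Multiset.map (fun x => x ^ 2) ({b} : Multiset ℝ)) 0
      have h6 := my_esymm_cons a ({b} : Multiset ℝ) 0
      rw [show (0:ℕ)+1 = 1 from rfl] at h5 h6
      rw [my_esymm_zero, h2] at h5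
      rw [my_esymm_zero, h1] at h6
      rw [show (0:ℕ)+1 = 1 from rfl, show (0:ℕ)+2 = 2 from rfl, my_esymm_zero, h4, h5, h6]
      ring
    | Nat.succ m =>
      have key := ih m (by omega)
      have e2 : s.esymm (m + 2) = s.prod := by rw [← hcs]; exact my_esymm_card s
      have f2 : (s.map (fun x => x ^ 2)).esymm (m + 2) = s.prod ^ 2 := by
        rw [show m + 2 = Multiset.card (s.map (fun x => x ^ 2)) by simp [hcs], my_esymm_card,
          sq_map_prod]
      have e3 : s.esymm (m + 3) = 0 := my_esymm_above s _ (by omega)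
      rw [show m + 1 + 1 = m + 2 by ring, show m + 1 + 2 = m + 3 by ring]
      rw [my_esymm_cons, my_esymm_cons, my_esymm_cons, my_esymm_cons, e2, e3, f2]
      rw [e2] at key
      linear_combination a ^ 2 * key

lemma multiset_sum_pos (s : Multiset ℝ) (h : ∀ x ∈ s, 0 < x) (hne : s ≠ 0) : 0 < s.sum := by
  induction s using Multiset.induction with
  | empty => simp at hne
  | cons a s ih =>
    rw [Multiset.sum_cons]
    rcases eq_or_ne s 0 with rfl | hs
    · simpa using h a (by simp)
    · have := ih (fun x hx => h x (Multiset.mem_cons_of_mem hx)) hs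
      have := h a (Multiset.mem_cons_self a s)
      linarith

lemma multiset_prod_pos (s : Multiset ℝ) (h : ∀ x ∈ s, 0 < x) : 0 < s.prod := by
  induction s using Multiset.induction with
  | empty => simp
  | cons a s ih =>
    rw [Multiset.prod_cons]
    exact mul_pos (h a (Multiset.mem_cons_self a s))
      (ih fun x hx => h x (Multiset.mem_cons_of_mem hx))

lemma vsigma_eq_esymm (N k : ℕ) (lam : Fin N → ℝ) :
    vsigma N k lam = ((Finset.univ.val.map lam).esymm k) := by
  rw [Finset.esymm_map_val]
  rfl

lemma newton_neg {N : ℕ} (lam : Fin N → ℝ) (j : ℕ) (hj1 : 1 ≤ j) (hjN : j + 1 ≤ N)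
    (h0 : vsigma N j lam = 0) (h1 : 0 < vsigma N (j + 1) lam) :
    vsigma N (j - 1) lam < 0 := by
  classical
  set ms : Multiset ℝ := Finset.univ.val.map lam with hms
  have hcard : Multiset.card ms = N := by simp [hms]
  set p : ℝ[X] := (ms.map fun r => X + C r).prod with hp
  -- coefficients of p
  have hcoeff : ∀ t : ℕ, t ≤ N → p.coeff t = vsigma N (N - t) lam := by
    intro t ht
    rw [hp, Multiset.prod_X_add_C_coeff ms (hcard ▸ ht), hcard, vsigma_eq_esymm]
  -- p as a product of X - C a
  have hprw : p = ((ms.map Neg.neg).map fun a => X - C a).prod := by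
    rw [hp]
    congr 1
    conv_rhs => rw [Multiset.map_map]
    symm
    apply Multiset.map_congr rfl
    intro x _
    simp [sub_neg_eq_add]
  have hroots : p.roots = ms.map Neg.neg := by
    rw [hprw, Polynomial.roots_multiset_prod_X_sub_C]
  have hrootscard : Multiset.card p.roots = N := by
    rw [hroots, Multiset.card_map, hcard]
  have hpdeg : p.natDegree = N := by
    rw [hprw, Polynomial.natDegree_multiset_prod_X_sub_C_eq_card, Multiset.card_map, hcard]
  set m : ℕ := N - j - 1 with hmdef
  set q : ℝ[X] := derivative^[m] p with hq
  -- root count of iterated derivatives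
  have hiter : ∀ i : ℕ, N - i ≤ Multiset.card (derivative^[i] p).roots := by
    intro i
    induction i with
    | zero => simp [hrootscard]
    | succ i ih =>
      have := Polynomial.card_roots_le_derivative (derivative^[i] p)
      rw [Function.iterate_succ_apply']
      omega
  have hqroots_ge : j + 1 ≤ Multiset.card q.roots := by
    have h5 : N - m ≤ Multiset.card q.roots := by rw [hq]; exact hiter m
    omega
  have hqdeg_le : q.natDegree ≤ j + 1 := by
    have h6 := Polynomial.natDegree_iterate_derivative p m
    rw [← hq] at h6
    omega
  have hqle := Polynomial.card_roots' q
  have hqdeg : q.natDegree = j + 1 := le_antisymm hqdeg_le (le_trans hqroots_ge hqle)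
  have hqroots : Multiset.card q.roots = j + 1 := le_antisymm (hqdeg ▸ hqle) hqroots_ge
  -- coefficients of q
  have hqc : ∀ t : ℕ, t ≤ 2 → q.coeff t =
      ((t + m).descFactorial m : ℝ) * vsigma N (j + 1 - t) lam := by
    intro t ht
    rw [hq, Polynomial.coeff_iterate_derivative, hcoeff (t + m) (by omega), nsmul_eq_mul]
    congr 2
    omega
  have hdf : ∀ t : ℕ, (0:ℝ) < ((t + m).descFactorial m : ℝ) := by
    intro t
    have : (t + m).descFactorial m ≠ 0 := by
      rw [Ne, Nat.descFactorial_eq_zero_iff_lt]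
      omega
    exact_mod_cast Nat.pos_of_ne_zero this
  have hc0 : 0 < q.coeff 0 := by
    rw [hqc 0 (by norm_num)]
    exact mul_pos (hdf 0) (by simpa using h1)
  have hc1 : q.coeff 1 = 0 := by
    rw [hqc 1 (by norm_num)]
    simp [h0]
  have hq0 : q ≠ 0 := fun h => by simp [h] at hc0
  have hlc : q.leadingCoeff ≠ 0 := Polynomial.leadingCoeff_ne_zero.mpr hq0
  -- Vieta for q
  have hv : ∀ t : ℕ, t ≤ 2 → q.coeff t =
      q.leadingCoeff * (-1) ^ (j + 1 - t) * q.roots.esymm (j + 1 - t) := by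
    intro t ht
    have := Polynomial.coeff_eq_esymm_roots_of_card (hqroots.trans hqdeg.symm)
      (p := q) (k := t) (by omega)
    rwa [hqdeg] at this
  set M : Multiset ℝ := q.roots with hM
  -- esymm j of M is zero
  have hEj : M.esymm j = 0 := by
    have hvv := hv 1 (by norm_num)
    rw [hc1] at hvv
    have h2 : q.leadingCoeff * (-1 : ℝ) ^ (j + 1 - 1) ≠ 0 := by
      apply mul_ne_zero hlc
      apply pow_ne_zero
      norm_num
    have h3 := (mul_eq_zero.mp hvv.symm).resolve_left h2
    rwa [show j + 1 - 1 = j by omega] at h3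
  have hEn : M.esymm (j + 1) = M.prod := by rw [← hqroots]; exact my_esymm_card M
  -- M.prod ≠ 0
  have hv0 := hv 0 (by norm_num)
  rw [show j + 1 - 0 = j + 1 by omega] at hv0
  have hEn_ne : M.esymm (j + 1) ≠ 0 := by
    intro hzero
    rw [hzero, mul_zero] at hv0
    exact absurd hv0 (ne_of_gt hc0)
  have hMprod_ne : M.prod ≠ 0 := hEn ▸ hEn_ne
  have hMelem : ∀ x ∈ M, x ≠ 0 := by
    intro x hx hx0
    exact hMprod_ne (Multiset.prod_eq_zero (hx0 ▸ hx))
  -- positivity of the "sum of squares" term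
  have hF : 0 < (M.map (fun x => x ^ 2)).esymm j := by
    rw [Multiset.esymm]
    apply multiset_sum_pos
    · intro x hx
      obtain ⟨t, htmem, rfl⟩ := Multiset.mem_map.mp hx
      obtain ⟨hle, _⟩ := Multiset.mem_powersetCard.mp htmem
      apply multiset_prod_pos
      intro y hy
      obtain ⟨z, hz, rfl⟩ := Multiset.mem_map.mp (Multiset.mem_of_le hle hy)
      exact pow_two_pos_of_ne_zero (hMelem z hz)
    · intro hzero
      rw [Multiset.map_eq_zero] at hzero
      have : Multiset.card (Multiset.powersetCard j (M.map fun x => x ^ 2)) = (j+1).choose j := by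
        rw [Multiset.card_powersetCard, Multiset.card_map, hqroots]
      rw [hzero] at this
      simp at this
  -- the key identity
  have hkey := my_esymm_identity M (j - 1) (by rw [hqroots]; omega)
  rw [show j - 1 + 1 = j by omega, show j - 1 + 2 = j + 1 by omega, hEj] at hkey
  have hEE : M.esymm (j + 1) * M.esymm (j - 1) < 0 := by nlinarith [hF]
  -- sign computation
  have hv2 := hv 2 (by norm_num)
  rw [show j + 1 - 2 = j - 1 by omega] at hv2
  have hexp : (-1 : ℝ) ^ (j + 1) = (-1 : ℝ) ^ (j - 1) := by
    rw [show j + 1 = (j - 1) + 2 by omega, pow_add]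
    norm_num
  have h02 : q.coeff 0 * q.coeff 2 =
      (q.leadingCoeff ^ 2 * ((-1 : ℝ) ^ (j - 1)) ^ 2) * (M.esymm (j + 1) * M.esymm (j - 1)) := by
    rw [hv0, hv2, hexp]
    ring
  have hposfac : 0 < q.leadingCoeff ^ 2 * ((-1 : ℝ) ^ (j - 1)) ^ 2 := by
    apply mul_pos (pow_two_pos_of_ne_zero hlc)
    apply pow_two_pos_of_ne_zero
    apply pow_ne_zero
    norm_num
  have hneg : q.coeff 0 * q.coeff 2 < 0 := by
    rw [h02]
    exact mul_neg_of_pos_of_neg hposfac hEE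
  have hc2neg : q.coeff 2 < 0 := by nlinarith [hc0]
  have hc2 := hqc 2 (by norm_num)
  rw [show j + 1 - 2 = j - 1 by omega] at hc2
  rw [hc2] at hc2neg
  nlinarith [hdf 2]

lemma continuous_vsigma (N k : ℕ) : Continuous fun lam : Fin N → ℝ => vsigma N k lam := by
  unfold vsigma
  exact continuous_finset_sum _ fun s _ => continuous_finset_prod _ fun i _ => continuous_apply i

lemma vsigma_ones (N k : ℕ) : vsigma N k (fun _ => (1:ℝ)) = (N.choose k : ℝ) := by
  unfold vsigma
  simp [Finset.card_powersetCard]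

lemma vsigma_zero (N : ℕ) (lam : Fin N → ℝ) : vsigma N 0 lam = 1 := by
  unfold vsigma
  simp

theorem gammaPlus_nested {N : ℕ} (hN : 1 ≤ N) (k : ℕ) (hk1 : 1 ≤ k) (hkN : k ≤ N - 1) :
    GammaPlus N (k + 1) ⊆ GammaPlus N k := by
  have hkN' : k + 1 ≤ N := by omega
  set one : Fin N → ℝ := fun _ => 1 with hone
  set U1 : Set (Fin N → ℝ) := {x | ∀ j ∈ Finset.Icc 1 k, 0 < vsigma N j x} with hU1
  set U2 : Set (Fin N → ℝ) := {x | ∃ j ∈ Finset.Icc 1 k, vsigma N j x < 0} with hU2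
  have hU1open : IsOpen U1 := by
    have : U1 = ⋂ j ∈ Finset.Icc 1 k, {x | 0 < vsigma N j x} := by
      ext x; simp [hU1, Set.mem_iInter]
    rw [this]
    exact isOpen_biInter_finset fun j _ =>
      isOpen_lt continuous_const (continuous_vsigma N j)
  have hU2open : IsOpen U2 := by
    have : U2 = ⋃ j ∈ Finset.Icc 1 k, {x | vsigma N j x < 0} := by
      ext x; simp [hU2]
    rw [this]
    exact isOpen_biUnion fun j _ =>
      isOpen_lt (continuous_vsigma N j) continuous_const
  have hdisj : Disjoint U1 U2 := by
    rw [Set.disjoint_left]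
    rintro x hx ⟨j, hj, hneg⟩
    exact absurd (hx j hj) (by linarith)
  have hpre : IsPreconnected (GammaPlus N (k + 1)) := isPreconnected_connectedComponentIn
  have hsub : GammaPlus N (k + 1) ⊆ U1 ∪ U2 := by
    intro x hx
    have hx1 : 0 < vsigma N (k + 1) x :=
      connectedComponentIn_subset {lam | 0 < vsigma N (k + 1) lam} one hx
    by_contra hxc
    simp only [Set.mem_union, not_or] at hxc
    obtain ⟨hnu1, hnu2⟩ := hxc
    have hnonneg : ∀ j ∈ Finset.Icc 1 k, 0 ≤ vsigma N j x := by
      intro j hj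
      by_contra hc
      exact hnu2 ⟨j, hj, by linarith⟩
    obtain ⟨j₀, hj₀, hj₀z⟩ : ∃ j ∈ Finset.Icc 1 k, vsigma N j x = 0 := by
      rw [hU1, Set.mem_setOf_eq] at hnu1
      push_neg at hnu1
      obtain ⟨j, hj, hle⟩ := hnu1
      exact ⟨j, hj, le_antisymm hle (hnonneg j hj)⟩
    -- take the largest zero index
    set T := (Finset.Icc 1 k).filter (fun j => vsigma N j x = 0) with hT
    have hTne : T.Nonempty := ⟨j₀, Finset.mem_filter.mpr ⟨hj₀, hj₀z⟩⟩
    set jm := T.max' hTne with hjm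
    have hjmT : jm ∈ T := T.max'_mem hTne
    obtain ⟨hjmIcc, hjmz⟩ := Finset.mem_filter.mp hjmT
    rw [Finset.mem_Icc] at hjmIcc
    have hnext : 0 < vsigma N (jm + 1) x := by
      rcases eq_or_lt_of_le hjmIcc.2 with heq | hlt
      · rw [heq]; exact hx1
      · have hmem : jm + 1 ∈ Finset.Icc 1 k := Finset.mem_Icc.mpr ⟨by omega, by omega⟩
        rcases lt_or_eq_of_le (hnonneg _ hmem) with h | h
        · exact h
        · exfalso
          have : jm + 1 ∈ T := Finset.mem_filter.mpr ⟨hmem, h.symm⟩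
          have := Finset.le_max' T _ this
          omega
    have hprev := newton_neg x jm hjmIcc.1 (by omega) hjmz hnext
    rcases eq_or_lt_of_le hjmIcc.1 with heq | hlt
    · rw [← heq] at hprev
      norm_num [vsigma_zero] at hprev
    · have hmem : jm - 1 ∈ Finset.Icc 1 k := Finset.mem_Icc.mpr ⟨by omega, by omega⟩
      have := hnonneg _ hmem
      linarith
  have honeU : one ∈ {lam | 0 < vsigma N (k + 1) lam} := by
    rw [hone]
    have : (0:ℝ) < (N.choose (k+1) : ℝ) := by
      exact_mod_cast Nat.choose_pos hkN'
    simpa [Set.mem_setOf_eq, vsigma_ones] using this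
  have honeG : one ∈ GammaPlus N (k + 1) := mem_connectedComponentIn honeU
  have hone1 : one ∈ U1 := by
    intro j hj
    rw [Finset.mem_Icc] at hj
    rw [hone, vsigma_ones]
    exact_mod_cast Nat.choose_pos (by omega)
  have hU1' : GammaPlus N (k + 1) ⊆ U1 :=
    hpre.subset_left_of_subset_union hU1open hU2open hdisj hsub ⟨one, honeG, hone1⟩
  have hGk : GammaPlus N (k + 1) ⊆ {lam | 0 < vsigma N k lam} := by
    intro x hx
    exact hU1' hx k (Finset.mem_Icc.mpr ⟨hk1, le_refl k⟩)
  exact hpre.subset_connectedComponentIn honeG hGk
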